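/- If all odds satisfy wₙ ∈ [w_lb, w_ub] with 0 < w_lb < w_ub, then for any adjacent pair (x,x̃) with w_a ≤ w_b, the contraction rate c(x,x̃) = (1/((N-I)I))[|1 - wₐ/w_b| + Σ_{i₁∈S₁∩S̃₁} min(1, wₐ/w_{i₁}) + Σ_{i₀∈S₀∩S̃₀} min(1, w_{i₀}/w_b)] is at least (N-2)/((N-I)I) · (w_lb/w_ub). -/
import Mathlib


open Finset

/-- If all odds lie in `[w_lb, w_ub]` with `0 < w_lb < w_ub`, the contraction
rate from any adjacent pair (with `wₐ ≤ w_b`) is at least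
`(N-2)/((N-I)I) · (w_lb/w_ub)`. -/
theorem contraction_rate_bounded_odds
    (N I : ℕ) (hN : 2 ≤ N) (hI1 : 1 ≤ I) (hIN : I ≤ N - 1)
    (wlb wub : ℝ) (hlb : 0 < wlb) (hlbub : wlb < wub)
    (w : Fin N → ℝ) (hw : ∀ n, wlb ≤ w n ∧ w n ≤ wub)
    (a b : Fin N) (hab : w a ≤ w b) (S1 S0 : Finset (Fin N))
    (hS1 : S1.card = I - 1) (hS0 : S0.card = N - I - 1) :
    ((N : ℝ) - 2) / (((N : ℝ) - I) * I) * (wlb / wub)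
      ≤ (1 / (((N : ℝ) - I) * I)) *
          (|1 - w a / w b|
            + (∑ i₁ ∈ S1, min 1 (w a / w i₁))
            + (∑ i₀ ∈ S0, min 1 (w i₀ / w b))) := by
  have hub : 0 < wub := hlb.trans hlbub
  have hr : wlb / wub ≤ 1 := by
    rw [div_le_one hub]; exact hlbub.le
  have hrpos : 0 < wlb / wub := div_pos hlb hub
  have hkey : ∀ x y : Fin N, wlb / wub ≤ min 1 (w x / w y) := by
    intro x y
    refine le_min hr ?_
    have hx := hw x; have hy := hw y
    have hypos : 0 < w y := lt_of_lt_of_le hlb hy.1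
    rw [div_le_div_iff₀ hub hypos]
    nlinarith [hx.1, hy.2]
  have h1 : ∀ i₁ ∈ S1, wlb / wub ≤ min 1 (w a / w i₁) := fun i _ => hkey a i
  have h0 : ∀ i₀ ∈ S0, wlb / wub ≤ min 1 (w i₀ / w b) := fun i _ => hkey i b
  have hs1 : (S1.card : ℝ) * (wlb / wub) ≤ ∑ i₁ ∈ S1, min 1 (w a / w i₁) :=
    by simpa [nsmul_eq_mul] using Finset.card_nsmul_le_sum S1 _ _ h1
  have hs0 : (S0.card : ℝ) * (wlb / wub) ≤ ∑ i₀ ∈ S0, min 1 (w i₀ / w b) :=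
    by simpa [nsmul_eq_mul] using Finset.card_nsmul_le_sum S0 _ _ h0
  have hIle : I ≤ N := le_trans hIN (Nat.sub_le N 1)
  have hcards : ((S1.card : ℝ)) + (S0.card : ℝ) = (N : ℝ) - 2 := by
    rw [hS1, hS0]
    have h1' : 1 ≤ N - I := Nat.le_sub_of_add_le (by omega)
    push_cast [Nat.cast_sub hI1, Nat.cast_sub hIle, Nat.cast_sub h1']
    push_cast [Nat.cast_sub hIle]
    ring
  have hden : 0 < ((N : ℝ) - I) * I := by
    have : I < N := by omega
    have h1 : (0:ℝ) < (N:ℝ) - I := by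
      have : (I:ℝ) < N := by exact_mod_cast this
      linarith
    have h2 : (0:ℝ) < I := by exact_mod_cast hI1
    positivity
  rw [div_mul_eq_mul_div, div_le_iff₀ hden, one_div, inv_mul_eq_div,
    div_mul_eq_mul_div, mul_div_assoc, div_self (ne_of_gt hden), mul_one]
  have habs : 0 ≤ |1 - w a / w b| := abs_nonneg _
  nlinarith [hs1, hs0, hcards, habs, hden]
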